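/- Let V be a finite-dimensional real vector space with a symplectic form ω, and let J be a compatible complex structure making (V, ω, J) a Hermitian vector space with a complex volume form Ω of unit norm. If L ⊂ V is a Lagrangian subspace on which Im Ω vanishes, then Re Ω restricts to a nonvanishing volume form on L. -/

import Mathlib

/-- V = ℂ^m with its standard Hermitian structure, symplectic form
ω(x,y) = Im⟪x,y⟫, compatible complex structure J = i, and complex volume form
Ω = dz¹∧…∧dz^m of unit norm (here Ω evaluated on vectors v₁,…,v_m is the determinant
det(vⱼ)ᵢ of their components).  If L is a real m-dimensional subspace which is
Lagrangian (ω|_L = 0) and on which Im Ω vanishes, then Re Ω is nonvanishing on L: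
for every real basis b of L, Re Ω(b₁,…,b_m) ≠ 0 (so Re Ω is a volume form on L). -/
theorem stmt11 (m : ℕ)
    (L : Submodule ℝ (EuclideanSpace ℂ (Fin m)))
    (hdim : Module.finrank ℝ L = m)
    (hLag : ∀ x ∈ L, ∀ y ∈ L, (inner ℂ x y : ℂ).im = 0)
    (hIm : ∀ v : Fin m → EuclideanSpace ℂ (Fin m), (∀ j, v j ∈ L) →
      (Matrix.det (Matrix.of fun i j => v j i)).im = 0) :
    ∀ b : Module.Basis (Fin m) ℝ L,
      (Matrix.det (Matrix.of fun i j => ((b j : EuclideanSpace ℂ (Fin m)) i))).re ≠ 0 := by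
  intro b hre
  set A : Matrix (Fin m) (Fin m) ℂ :=
    Matrix.of fun i j => ((b j : EuclideanSpace ℂ (Fin m)) i) with hA
  have him : A.det.im = 0 := hIm (fun j => (b j : EuclideanSpace ℂ (Fin m))) (fun j => (b j).2)
  have hdet : A.det = 0 := Complex.ext hre him
  -- columns are ℂ-linearly dependent
  obtain ⟨c, hc0, hc⟩ : ∃ c : Fin m → ℂ, c ≠ 0 ∧ A.mulVec c = 0 := by
    obtain ⟨c, hc, hc0⟩ := Matrix.exists_mulVec_eq_zero_iff.2 hdet
    exact ⟨c, hc, hc0⟩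
  -- the corresponding complex linear combination of b j vanishes
  have hsum : ∑ j, c j • (b j : EuclideanSpace ℂ (Fin m)) = 0 := by
    ext i
    have h := congrFun hc i
    rw [show (∑ j, c j • (b j : EuclideanSpace ℂ (Fin m))) i
        = ∑ j, (c j • (b j : EuclideanSpace ℂ (Fin m))) i from
      by simp]
    simpa [Matrix.mulVec, dotProduct, hA, smul_eq_mul, mul_comm] using h
  set x : EuclideanSpace ℂ (Fin m) := ∑ j, ((c j).re : ℝ) • (b j : EuclideanSpace ℂ (Fin m)) with hx
  set y : EuclideanSpace ℂ (Fin m) := ∑ j, ((c j).im : ℝ) • (b j : EuclideanSpace ℂ (Fin m)) with hy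
  have hxL : x ∈ L := Submodule.sum_mem _ fun j _ => Submodule.smul_mem _ _ (b j).2
  have hyL : y ∈ L := Submodule.sum_mem _ fun j _ => Submodule.smul_mem _ _ (b j).2
  have hxy : x + Complex.I • y = 0 := by
    rw [hx, hy, Finset.smul_sum, ← Finset.sum_add_distrib, ← hsum]
    refine Finset.sum_congr rfl fun j _ => ?_
    have hrs : ∀ (r : ℝ) (v : EuclideanSpace ℂ (Fin m)), r • v = (r : ℂ) • v :=
      fun r v => (Complex.coe_smul r v).symm
    rw [hrs, hrs, smul_smul, ← add_smul]
    congr 1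
    rw [mul_comm]
    exact Complex.re_add_im (c j)
  -- show y = 0
  have hinner : (inner ℂ y (x + Complex.I • y) : ℂ) = 0 := by rw [hxy, inner_zero_right]
  have himy : (inner ℂ y x : ℂ).im = 0 := hLag y hyL x hxL
  have hyy : (inner ℂ y y : ℂ) = (‖y‖ : ℂ)^2 := by
    rw [inner_self_eq_norm_sq_to_K]; norm_cast
  have hny : ‖y‖ = 0 := by
    have h1 : (inner ℂ y (x + Complex.I • y) : ℂ)
        = inner ℂ y x + Complex.I * inner ℂ y y := by
      rw [inner_add_right, inner_smul_right]
    have h2 : (0 : ℂ).im = (inner ℂ y x + Complex.I * inner ℂ y y : ℂ).im := by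
      rw [← h1, hinner]
    rw [hyy] at h2
    simp only [Complex.add_im, himy, zero_add, Complex.zero_im] at h2
    have : (Complex.I * (‖y‖ : ℂ)^2).im = ‖y‖^2 := by
      simp [Complex.mul_im, ← Complex.ofReal_pow]
    rw [this] at h2
    nlinarith [norm_nonneg y]
  have hy0 : y = 0 := norm_eq_zero.mp hny
  have hx0 : x = 0 := by
    have := hxy
    rw [hy0, smul_zero, add_zero] at this
    exact this
  -- lift to L and use linear independence
  have key : ∀ (f : Fin m → ℝ),
      (∑ j, (f j : ℝ) • (b j : EuclideanSpace ℂ (Fin m)) = 0) → ∀ j, f j = 0 := by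
    intro f hf j
    have hsub : ((∑ j, f j • b j : L) : EuclideanSpace ℂ (Fin m)) = 0 := by
      push_cast
      exact hf
    have hz : (∑ j, f j • b j : L) = 0 := Subtype.ext hsub
    have hli := b.linearIndependent
    rw [Fintype.linearIndependent_iff] at hli
    exact hli f hz j
  have hre0 : ∀ j, (c j).re = 0 := key _ (by rw [← hx]; exact hx0)
  have him0 : ∀ j, (c j).im = 0 := key _ (by rw [← hy]; exact hy0)
  exact hc0 (funext fun j => Complex.ext (hre0 j) (him0 j))
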